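/- arXiv:math/0702273 — 4 statements merged into one kernel-verified Lean document; each statement's English description precedes it below -/
import Mathlib

section
/- Let G be a group, h : G → ℝ a function, and D ≥ 0 with |h(γ₁γ₂) − h(γ₁) − h(γ₂)| ≤ D for all γ₁, γ₂ ∈ G. Let Q₁, …, Q_k be subgroups of G and B ≥ 0 with |h(q)| ≤ B for every q belonging to some Q_i. If h is unbounded on G (for every M there is g ∈ G with |h(g)| > M), then G is not boundedly generated by the Q_i: for every natural number N there exists g ∈ G that cannot be written as a product of at most N elements of Q₁ ∪ ⋯ ∪ Q_k. -/
/-- If a quasi-homomorphism `h` with defect bound `D` is bounded by `B` on each of the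
subgroups `Q₁, …, Q_k` but unbounded on `G`, then `G` is not boundedly generated by
the `Q_i`: for every `N` there is an element `g` that is not a product of at most
`N` elements of `Q₁ ∪ ⋯ ∪ Q_k`. -/
theorem not_boundedly_generated_of_unbounded_quasihom {G : Type*} [Group G]
    (h : G → ℝ) (D : ℝ) (hD : 0 ≤ D)
    (hdef : ∀ γ₁ γ₂ : G, |h (γ₁ * γ₂) - h γ₁ - h γ₂| ≤ D)
    {k : ℕ} (Q : Fin k → Subgroup G) (B : ℝ) (hB : 0 ≤ B)
    (hQ : ∀ i : Fin k, ∀ q ∈ Q i, |h q| ≤ B)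
    (hub : ∀ M : ℝ, ∃ g : G, M < |h g|) :
    ∀ N : ℕ, ∃ g : G,
      ¬ ∃ l : List G, l.length ≤ N ∧ (∀ x ∈ l, ∃ i : Fin k, x ∈ Q i) ∧ l.prod = g := by
  have hone : |h 1| ≤ D := by
    have := hdef 1 1
    simp at this
    simpa using this
  have key : ∀ l : List G, (∀ x ∈ l, ∃ i : Fin k, x ∈ Q i) →
      |h l.prod| ≤ l.length * (B + D) + D := by
    intro l
    induction l with
    | nil => intro _; simpa using hone
    | cons x t ih =>
      intro hmem
      have hx : |h x| ≤ B := by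
        obtain ⟨i, hi⟩ := hmem x (by simp)
        exact hQ i x hi
      have ht : |h t.prod| ≤ t.length * (B + D) + D :=
        ih (fun y hy => hmem y (by simp [hy]))
      have hd := hdef x t.prod
      have : |h (x * t.prod)| ≤ |h x| + |h t.prod| + D := by
        have := abs_sub_abs_le_abs_sub (h (x * t.prod)) (h x + h t.prod)
        have h2 : |h (x * t.prod) - (h x + h t.prod)| ≤ D := by
          have : h (x * t.prod) - (h x + h t.prod) = h (x * t.prod) - h x - h t.prod := by ring
          rw [this]; exact hd
        calc |h (x * t.prod)| ≤ |h x + h t.prod| + |h (x * t.prod) - (h x + h t.prod)| := by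
              have := abs_add_le (h x + h t.prod) (h (x * t.prod) - (h x + h t.prod))
              simpa using this
          _ ≤ (|h x| + |h t.prod|) + D := add_le_add (abs_add_le _ _) h2
          _ = |h x| + |h t.prod| + D := by ring
      simp only [List.prod_cons, List.length_cons]
      push_cast
      nlinarith [this, hx, ht]
  intro N
  obtain ⟨g, hg⟩ := hub (N * (B + D) + D)
  refine ⟨g, ?_⟩
  rintro ⟨l, hlen, hmem, rfl⟩
  have h1 := key l hmem
  have h2 : (l.length : ℝ) * (B + D) + D ≤ N * (B + D) + D := by
    have : (l.length : ℝ) ≤ N := by exact_mod_cast hlen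
    nlinarith
  linarith
end

section
/- Let G be a group, h : G → ℝ a function, and D ≥ 0 with |h(γ₁γ₂) − h(γ₁) − h(γ₂)| ≤ D for all γ₁, γ₂ ∈ G. Let Q₁, …, Q_m be subgroups of G and B ≥ 0 with |h(q)| ≤ B for every q belonging to some Q_i. If h is unbounded on G (for every M there is g ∈ G with |h(g)| > M), then Q₁Q₂⋯Q_m ≠ G; that is, there exists g ∈ G which cannot be written as g = q₁q₂⋯q_m with q_i ∈ Q_i for each i. -/
lemma quasihom_list_bound {G : Type*} [Group G]
    (h : G → ℝ) (D : ℝ) (hD : 0 ≤ D)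
    (hdef : ∀ γ₁ γ₂ : G, |h (γ₁ * γ₂) - h γ₁ - h γ₂| ≤ D)
    (B : ℝ) :
    ∀ l : List G, (∀ x ∈ l, |h x| ≤ B) →
      |h l.prod| ≤ B * l.length + D * l.length + D := by
  have h1 : |h (1 : G)| ≤ D := by
    have := hdef 1 1
    simp at this
    simpa using this
  intro l
  induction l with
  | nil => intro _; simpa using h1
  | cons a t ih =>
    intro hmem
    have ha : |h a| ≤ B := hmem a List.mem_cons_self
    have ht : |h t.prod| ≤ B * t.length + D * t.length + D :=
      ih (fun x hx => hmem x (List.mem_cons_of_mem a hx))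
    have hd := hdef a t.prod
    have : |h (a * t.prod)| ≤ |h a| + |h t.prod| + D := by
      have := abs_sub_abs_le_abs_sub (h (a * t.prod)) (h a + h t.prod)
      have h2 : |h (a * t.prod) - (h a + h t.prod)| ≤ D := by
        convert hd using 2; ring
      have h3 : |h a + h t.prod| ≤ |h a| + |h t.prod| := abs_add_le _ _
      linarith
    simp only [List.prod_cons, List.length_cons]
    push_cast
    nlinarith

/-- If a quasi-homomorphism `h` with defect bound `D` is bounded by `B` on each of the
subgroups `Q₁, …, Q_m` but unbounded on `G`, then the product set
`Q₁Q₂⋯Q_m` is not all of `G`. -/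
theorem product_set_ne_group_of_unbounded_quasihom {G : Type*} [Group G]
    (h : G → ℝ) (D : ℝ) (hD : 0 ≤ D)
    (hdef : ∀ γ₁ γ₂ : G, |h (γ₁ * γ₂) - h γ₁ - h γ₂| ≤ D)
    {m : ℕ} (Q : Fin m → Subgroup G) (B : ℝ) (hB : 0 ≤ B)
    (hQ : ∀ i : Fin m, ∀ q ∈ Q i, |h q| ≤ B)
    (hub : ∀ M : ℝ, ∃ g : G, M < |h g|) :
    ∃ g : G, ¬ ∃ q : Fin m → G, (∀ i, q i ∈ Q i) ∧ (List.ofFn q).prod = g := by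
  obtain ⟨g, hg⟩ := hub (B * m + D * m + D)
  refine ⟨g, ?_⟩
  rintro ⟨q, hq, rfl⟩
  have hbound : ∀ x ∈ List.ofFn q, |h x| ≤ B := by
    intro x hx
    rw [List.mem_ofFn] at hx
    obtain ⟨i, rfl⟩ := hx
    exact hQ i (q i) (hq i)
  have := quasihom_list_bound h D hD hdef B (List.ofFn q) hbound
  rw [List.length_ofFn] at this
  linarith
end

section
/- Let R > 0 and I > 0 be real numbers, let p ≥ q > 0 be real numbers, and let α, β ≥ 0 be real numbers satisfying α ≤ R·√I, β ≤ R·√I, and p·β ≤ q·α. Then q·α + p·β ≤ 2·R·√(p·q·I). -/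
/-- Computational core of Lemma "ax3": if `α, β ≤ R·√I` and `p·β ≤ q·α` with
`p ≥ q > 0`, then `q·α + p·β ≤ 2·R·√(p·q·I)`. -/
theorem length_bound_weighted_midpoint (R I p q α β : ℝ)
    (hR : 0 < R) (hI : 0 < I) (hq : 0 < q) (hpq : q ≤ p)
    (hα : 0 ≤ α) (hβ : 0 ≤ β)
    (hαR : α ≤ R * Real.sqrt I) (hβR : β ≤ R * Real.sqrt I)
    (hbal : p * β ≤ q * α) :
    q * α + p * β ≤ 2 * R * Real.sqrt (p * q * I) := by
  have h1 : q * α + p * β ≤ 2 * (q * α) := by linarith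
  have h2 : q * α ≤ q * (R * Real.sqrt I) := by
    exact mul_le_mul_of_nonneg_left hαR hq.le
  have hsq : q * Real.sqrt I ≤ Real.sqrt (p * q * I) := by
    have : q * Real.sqrt I = Real.sqrt (q * q * I) := by
      rw [Real.sqrt_mul (by positivity), Real.sqrt_mul_self hq.le]
    rw [this]
    exact Real.sqrt_le_sqrt (by nlinarith [mul_pos hq hI])
  calc q * α + p * β ≤ 2 * (q * (R * Real.sqrt I)) := by linarith
    _ = 2 * R * (q * Real.sqrt I) := by ring
    _ ≤ 2 * R * Real.sqrt (p * q * I) := by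
        exact mul_le_mul_of_nonneg_left hsq (by positivity)
end

section
/- Let X be a connected graph with vertex set V and edge-path metric d. Suppose that for each ordered pair of vertices (a, b) there is given a subset Λ_{ab} ⊆ V with a, b ∈ Λ_{ab}, together with a relation ≤_{ab} on Λ_{ab} that is transitive and total (any two elements of Λ_{ab} are comparable), such that Λ_{ab} = Λ_{ba} as sets and ≤_{ba} is the reverse of ≤_{ab}. Suppose also given a function φ : V × V × V → V that is invariant under all permutations of its three arguments and satisfies φ(a, b, c) ∈ Λ_{ab} for all a, b, c. For x, y ∈ Λ_{ab} write Λ_{ab}[x, y] = {z ∈ Λ_{ab} : x ≤_{ab} z ≤_{ab} y or y ≤_{ab} z ≤_{ab} x}. Assume there exists K > 0 such that: (1) for all vertices a, b, c, the Hausdorff distance between Λ_{ab}[a, φ(a,b,c)] and Λ_{ac}[a, φ(a,b,c)] is at most K; (2) whenever c and d are adjacent vertices, the diameter of Λ_{ab}[φ(a,b,c), φ(a,b,d)] is at most K for all a, b; (3) whenever c ∈ Λ_{ab}, the diameter of Λ_{ab}[c, φ(a,b,c)] is at most K. Then X is Gromov hyperbolic: there exists δ ≥ 0 such that for all vertices x,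 y, z, w, d(x,y) + d(z,w) ≤ max(d(x,z) + d(y,w), d(x,w) + d(y,z)) + δ. -/
/-- The (coarse) interval `Λ_{ab}[x, y]`: points of `Λ a b` lying between `x` and `y`
with respect to the coarse order `le a b` (in either direction). -/
def coarseInterval {V : Type*} (Λ : V → V → Set V) (le : V → V → V → V → Prop)
    (a b x y : V) : Set V :=
  {z ∈ Λ a b | (le a b x z ∧ le a b z y) ∨ (le a b y z ∧ le a b z x)}

namespace Bow

open Classical

structure Ctx (V : Type*) where
  G : SimpleGraph V
  conn : G.Connected
  Λ : V → V → Set V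
  le : V → V → V → V → Prop
  mem : ∀ a b : V, a ∈ Λ a b ∧ b ∈ Λ a b
  trans : ∀ a b x y z : V, le a b x y → le a b y z → le a b x z
  total : ∀ a b : V, ∀ x ∈ Λ a b, ∀ y ∈ Λ a b, le a b x y ∨ le a b y x
  symmΛ : ∀ a b : V, Λ a b = Λ b a
  symmle : ∀ a b x y : V, le a b x y ↔ le b a y x
  φ : V → V → V → V
  swap₁ : ∀ a b c : V, φ a b c = φ b a c
  swap₂ : ∀ a b c : V, φ a b c = φ a c b
  φmem : ∀ a b c : V, φ a b c ∈ Λ a b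
  K : ℕ
  Kpos : 0 < K
  ax1 : ∀ a b c : V,
      (∀ x ∈ coarseInterval Λ le a b a (φ a b c),
        ∃ y ∈ coarseInterval Λ le a c a (φ a b c), G.dist x y ≤ K) ∧
      (∀ y ∈ coarseInterval Λ le a c a (φ a b c),
        ∃ x ∈ coarseInterval Λ le a b a (φ a b c), G.dist x y ≤ K)
  ax2 : ∀ a b c d : V, G.Adj c d →
      ∀ x ∈ coarseInterval Λ le a b (φ a b c) (φ a b d),
      ∀ y ∈ coarseInterval Λ le a b (φ a b c) (φ a b d), G.dist x y ≤ K
  ax3 : ∀ a b c : V, c ∈ Λ a b →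
      ∀ x ∈ coarseInterval Λ le a b c (φ a b c),
      ∀ y ∈ coarseInterval Λ le a b c (φ a b c), G.dist x y ≤ K

variable {V : Type*}

/-- distance -/
noncomputable def Ctx.d (S : Ctx V) (x y : V) : ℕ := S.G.dist x y

/-- interval -/
def Ctx.I (S : Ctx V) (a b x y : V) : Set V := coarseInterval S.Λ S.le a b x y

namespace Ctx

variable (S : Ctx V)

lemma d_comm (x y : V) : S.d x y = S.d y x := SimpleGraph.dist_comm

lemma d_self (x : V) : S.d x x = 0 := SimpleGraph.dist_self

lemma d_tri (x y z : V) : S.d x z ≤ S.d x y + S.d y z := S.conn.dist_triangle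

lemma d_adj {x y : V} (h : S.G.Adj x y) : S.d x y ≤ 1 := by
  have := SimpleGraph.dist_le (SimpleGraph.Walk.cons h SimpleGraph.Walk.nil)
  simpa [Ctx.d] using this

lemma mem_I {a b x y z : V} :
    z ∈ S.I a b x y ↔ z ∈ S.Λ a b ∧
      ((S.le a b x z ∧ S.le a b z y) ∨ (S.le a b y z ∧ S.le a b z x)) := Iff.rfl

lemma I_subset {a b x y : V} : S.I a b x y ⊆ S.Λ a b := fun _ h => h.1

lemma I_comm (a b x y : V) : S.I a b x y = S.I a b y x := by
  ext z; simp only [mem_I]; tauto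

lemma I_pair (a b x y : V) : S.I a b x y = S.I b a x y := by
  ext z
  simp only [mem_I, ← S.symmΛ a b]
  rw [show S.le b a x z ↔ S.le a b z x from (S.symmle a b z x).symm,
    show S.le b a z y ↔ S.le a b y z from (S.symmle a b y z).symm,
    show S.le b a y z ↔ S.le a b z y from (S.symmle a b z y).symm,
    show S.le b a z x ↔ S.le a b x z from (S.symmle a b x z).symm]
  tauto

lemma refl {a b x : V} (hx : x ∈ S.Λ a b) : S.le a b x x :=
  (S.total a b x hx x hx).elim id id

lemma mem_I_left {a b x y : V} (hx : x ∈ S.Λ a b) (hy : y ∈ S.Λ a b) :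
    x ∈ S.I a b x y := by
  rcases S.total a b x hx y hy with h | h
  · exact ⟨hx, Or.inl ⟨S.refl hx, h⟩⟩
  · exact ⟨hx, Or.inr ⟨h, S.refl hx⟩⟩

lemma mem_I_right {a b x y : V} (hx : x ∈ S.Λ a b) (hy : y ∈ S.Λ a b) :
    y ∈ S.I a b x y := by rw [S.I_comm]; exact S.mem_I_left hy hx

/-- permutations of φ -/
lemma φ_rot (a b c : V) : S.φ a b c = S.φ b c a := by
  rw [S.swap₁, S.swap₂]

lemma φ_rot' (a b c : V) : S.φ a b c = S.φ c a b := by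
  rw [S.φ_rot, S.φ_rot]

lemma aΛ (a b : V) : a ∈ S.Λ a b := (S.mem a b).1
lemma bΛ (a b : V) : b ∈ S.Λ a b := (S.mem a b).2

/-- ax3 basic: distance from a member to its centre -/
lemma d_center {a b c : V} (hc : c ∈ S.Λ a b) : S.d c (S.φ a b c) ≤ S.K :=
  S.ax3 a b c hc c (S.mem_I_left hc (S.φmem a b c)) _ (S.mem_I_right hc (S.φmem a b c))

/-- ax3 interval version -/
lemma d_center_int {a b c z : V} (hc : c ∈ S.Λ a b) (hz : z ∈ S.I a b c (S.φ a b c)) :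
    S.d c z ≤ S.K :=
  S.ax3 a b c hc c (S.mem_I_left hc (S.φmem a b c)) z hz

/-- ax1 phrased with `I` -/
lemma ax1I (a b c : V) :
    (∀ x ∈ S.I a b a (S.φ a b c), ∃ y ∈ S.I a c a (S.φ a b c), S.d x y ≤ S.K) ∧
    (∀ y ∈ S.I a c a (S.φ a b c), ∃ x ∈ S.I a b a (S.φ a b c), S.d x y ≤ S.K) :=
  S.ax1 a b c

/-- one Lipschitz step -/
lemma lip_step {a b c c' : V} (h : c = c' ∨ S.G.Adj c c') :
    S.d (S.φ a b c) (S.φ a b c') ≤ S.K := by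
  rcases h with rfl | h
  · rw [S.d_self]; exact Nat.zero_le _
  · exact S.ax2 a b c c' h _ (S.mem_I_left (S.φmem a b c) (S.φmem a b c')) _
      (S.mem_I_right (S.φmem a b c) (S.φmem a b c'))

/-- Lipschitz along a coarse path -/
lemma lip_path {a b : V} (f : ℕ → V) (ℓ : ℕ)
    (hstep : ∀ i < ℓ, f i = f (i + 1) ∨ S.G.Adj (f i) (f (i + 1))) :
    ∀ j ≤ ℓ, S.d (S.φ a b (f 0)) (S.φ a b (f j)) ≤ S.K * j := by
  intro j
  induction j with
  | zero => intro _; rw [S.d_self]; exact Nat.zero_le _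
  | succ n ih =>
    intro hn
    calc S.d (S.φ a b (f 0)) (S.φ a b (f (n + 1)))
        ≤ S.d (S.φ a b (f 0)) (S.φ a b (f n)) + S.d (S.φ a b (f n)) (S.φ a b (f (n+1))) :=
          S.d_tri _ _ _
      _ ≤ S.K * n + S.K := by
          have h1 := ih (Nat.le_of_succ_le hn)
          have h2 := S.lip_step (a := a) (b := b) (hstep n (by omega))
          omega
      _ = S.K * (n + 1) := by ring

/-- existence of a geodesic coarse path -/
lemma exists_geo (a b : V) : ∃ f : ℕ → V, f 0 = a ∧ f (S.d a b) = b ∧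
    (∀ i < S.d a b, f i = f (i + 1) ∨ S.G.Adj (f i) (f (i + 1))) ∧
    (∀ i ≤ S.d a b, S.d a (f i) ≤ i ∧ S.d (f i) b ≤ S.d a b - i) := by
  obtain ⟨p, hp⟩ := S.conn.exists_walk_length_eq_dist a b
  have hd : S.d a b = p.length := hp.symm
  have h1 : ∀ j ≤ p.length, S.d a (p.getVert j) ≤ j := by
    intro j
    induction j with
    | zero => intro _; rw [p.getVert_zero, S.d_self]
    | succ n ih =>
      intro hn
      have ha := ih (by omega)
      have hb : S.d (p.getVert n) (p.getVert (n + 1)) ≤ 1 :=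
        S.d_adj (p.adj_getVert_succ (by omega))
      have := S.d_tri a (p.getVert n) (p.getVert (n + 1))
      omega
  have h2 : ∀ k j, p.length = j + k → S.d (p.getVert j) b ≤ k := by
    intro k
    induction k with
    | zero =>
      intro j hj
      have : p.getVert j = b := by
        have := p.getVert_length
        rw [show j = p.length by omega]
        exact this
      rw [this, S.d_self]
    | succ n ih =>
      intro j hj
      have ha := ih (j + 1) (by omega)
      have hb : S.d (p.getVert j) (p.getVert (j + 1)) ≤ 1 :=
        S.d_adj (p.adj_getVert_succ (by omega))
      have := S.d_tri (p.getVert j) (p.getVert (j + 1)) b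
      omega
  refine ⟨fun i => p.getVert i, p.getVert_zero, ?_, ?_, ?_⟩
  · show p.getVert (S.d a b) = b
    rw [hd]; exact p.getVert_length
  · intro i hi
    exact Or.inr (p.adj_getVert_succ (by omega))
  · intro i hi
    refine ⟨h1 i (by omega), ?_⟩
    have := h2 (p.length - i) i (by omega)
    simpa [hd] using this

/-- Lipschitz in the third argument, via distance -/
lemma lip_dist (a b c c' : V) : S.d (S.φ a b c) (S.φ a b c') ≤ S.K * S.d c c' := by
  obtain ⟨f, hf0, hfl, hstep, -⟩ := S.exists_geo c c'
  have := S.lip_path (a := a) (b := b) f (S.d c c') hstep (S.d c c') le_rfl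
  rw [hf0, hfl] at this
  exact this

/-- first-crossing auxiliary -/
lemma find_cross (Q : ℕ → Prop) : ∀ N, ¬ Q 0 → Q N → ∃ j < N, ¬ Q j ∧ Q (j + 1) := by
  intro N
  induction N with
  | zero => intro h0 hN; exact absurd hN h0
  | succ n ih =>
    intro h0 hN
    by_cases hn : Q n
    · obtain ⟨j, hj, h⟩ := ih h0 hn
      exact ⟨j, by omega, h⟩
    · exact ⟨n, by omega, hn, hN⟩

/-- crossing lemma: a point order-trapped by a sequence of small intervals
is close to one of its members. -/
lemma crossing {a b z : V} (hz : z ∈ S.Λ a b) (w : ℕ → V) (N : ℕ) (hN : 1 ≤ N)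
    (hwΛ : ∀ j ≤ N, w j ∈ S.Λ a b)
    (hsmall : ∀ j < N, ∀ v ∈ S.I a b (w j) (w (j + 1)),
      S.d v (w j) ≤ S.K ∨ S.d v (w (j + 1)) ≤ S.K)
    (h0 : S.le a b (w 0) z) (hNle : S.le a b z (w N)) :
    ∃ j ≤ N, S.d z (w j) ≤ S.K := by
  have key : ∃ j < N, z ∈ S.I a b (w j) (w (j + 1)) := by
    by_cases hQ0 : S.le a b z (w 0)
    · refine ⟨0, by omega, ?_⟩
      rcases S.total a b z hz (w 1) (hwΛ 1 (by omega)) with h | h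
      · exact ⟨hz, Or.inl ⟨h0, h⟩⟩
      · exact ⟨hz, Or.inr ⟨h, hQ0⟩⟩
    · obtain ⟨j, hj, hja, hjb⟩ := find_cross (fun j => S.le a b z (w j)) N hQ0 hNle
      have hwj : S.le a b (w j) z := by
        rcases S.total a b (w j) (hwΛ j (by omega)) z hz with h | h
        · exact h
        · exact absurd h hja
      exact ⟨j, hj, hz, Or.inl ⟨hwj, hjb⟩⟩
  obtain ⟨j, hj, hmem⟩ := key
  rcases hsmall j hj z hmem with h | h
  · exact ⟨j, by omega, h⟩
  · exact ⟨j + 1, by omega, h⟩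

/-- a tied point is close: if `z` is in the degenerate interval at `p` then it is
`K`-close to `p` (for `p ∈ Λ a b`). -/
lemma tie_close {a b p z : V} (hp : p ∈ S.Λ a b) (hz : z ∈ S.Λ a b)
    (h1 : S.le a b p z) (h2 : S.le a b z p) : S.d p z ≤ S.K := by
  have : z ∈ S.I a b p (S.φ a b p) := by
    rcases S.total a b z hz (S.φ a b p) (S.φmem a b p) with h | h
    · exact ⟨hz, Or.inl ⟨h1, h⟩⟩
    · exact ⟨hz, Or.inr ⟨h, h2⟩⟩
  exact S.d_center_int hp this

/-- INT (oriented): a point of an interval is K-close to an endpoint or to a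
centre of a walk vertex. -/
lemma int_or {a b x y : V} (hx : x ∈ S.Λ a b) (hy : y ∈ S.Λ a b)
    (f : ℕ → V) (ℓ : ℕ) (hf0 : f 0 = x) (hfl : f ℓ = y)
    (hstep : ∀ i < ℓ, f i = f (i + 1) ∨ S.G.Adj (f i) (f (i + 1)))
    {z : V} (hzΛ : z ∈ S.Λ a b) (hzx : S.le a b x z) (hzy : S.le a b z y) :
    S.d z x ≤ S.K ∨ S.d z y ≤ S.K ∨ ∃ j ≤ ℓ, S.d z (S.φ a b (f j)) ≤ S.K := by
  set w : ℕ → V := fun j => if j = 0 then x else if j ≤ ℓ + 1 then S.φ a b (f (j - 1)) else y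
    with hw
  have hw0 : w 0 = x := by simp [hw]
  have hwN : w (ℓ + 2) = y := by simp only [hw]; rw [if_neg (by omega), if_neg (by omega)]
  have hwmid : ∀ j, 1 ≤ j → j ≤ ℓ + 1 → w j = S.φ a b (f (j - 1)) := by
    intro j hj1 hj2; simp only [hw]; rw [if_neg (by omega), if_pos hj2]
  have hwΛ : ∀ j ≤ ℓ + 2, w j ∈ S.Λ a b := by
    intro j hj
    rcases Nat.eq_or_lt_of_le (Nat.zero_le j) with h0 | h0
    · rw [← h0, hw0]; exact hx
    rcases Nat.lt_or_ge j (ℓ + 2) with h2 | h2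
    · rw [hwmid j (by omega) (by omega)]; exact S.φmem a b _
    · rw [show j = ℓ + 2 by omega, hwN]; exact hy
  have hsmall : ∀ j < ℓ + 2, ∀ v ∈ S.I a b (w j) (w (j + 1)),
      S.d v (w j) ≤ S.K ∨ S.d v (w (j + 1)) ≤ S.K := by
    intro j hj v hv
    rcases Nat.eq_or_lt_of_le (Nat.zero_le j) with h0 | h0
    · -- j = 0 : interval between x and φ a b x
      subst h0
      rw [hw0, hwmid 1 (by omega) (by omega)] at hv
      simp only [Nat.sub_self] at hv
      rw [hf0] at hv
      left
      rw [hw0, S.d_comm]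
      exact S.d_center_int hx hv
    rcases Nat.lt_or_ge (j + 1) (ℓ + 2) with h2 | h2
    · -- middle
      rw [hwmid j (by omega) (by omega), hwmid (j + 1) (by omega) (by omega)] at hv ⊢
      simp only [Nat.add_sub_cancel] at hv ⊢
      have hj1 : j - 1 + 1 = j := by omega
      rcases hstep (j - 1) (by omega) with he | he
      · left
        rw [hj1] at he
        rw [← he] at hv
        rcases hv with ⟨hvΛ, hc⟩
        rcases hc with ⟨c1, c2⟩ | ⟨c1, c2⟩ <;>
        · rw [S.d_comm]; exact S.tie_close (S.φmem a b _) hvΛ c1 c2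
      · left
        rw [hj1] at he
        rw [S.d_comm]
        exact S.ax2 a b (f (j - 1)) (f j) he _
          (S.mem_I_left (S.φmem a b _) (S.φmem a b _)) v hv
    · -- last interval
      have hje : j = ℓ + 1 := by omega
      subst hje
      rw [hwmid (ℓ + 1) (by omega) (by omega), hwN] at hv ⊢
      simp only [Nat.add_sub_cancel] at hv ⊢
      rw [hfl] at hv ⊢
      right
      rw [S.d_comm]
      refine S.d_center_int hy ?_
      rw [S.I_comm]
      exact hv
  have h0 : S.le a b (w 0) z := by rw [hw0]; exact hzx
  have hNle : S.le a b z (w (ℓ + 2)) := by rw [hwN]; exact hzy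
  obtain ⟨j, hj, hd⟩ := S.crossing hzΛ w (ℓ + 2) (by omega) hwΛ hsmall h0 hNle
  rcases Nat.eq_or_lt_of_le (Nat.zero_le j) with hj0 | hj0
  · left; rw [show j = 0 from hj0.symm, hw0] at hd; exact hd
  rcases Nat.lt_or_ge j (ℓ + 2) with hj2 | hj2
  · right; right
    refine ⟨j - 1, by omega, ?_⟩
    rw [hwmid j (by omega) (by omega)] at hd
    exact hd
  · right; left
    rw [show j = ℓ + 2 by omega, hwN] at hd
    exact hd

/-- INT, both orientations -/
lemma int {a b x y : V} (hx : x ∈ S.Λ a b) (hy : y ∈ S.Λ a b)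
    (f : ℕ → V) (ℓ : ℕ) (hf0 : f 0 = x) (hfl : f ℓ = y)
    (hstep : ∀ i < ℓ, f i = f (i + 1) ∨ S.G.Adj (f i) (f (i + 1)))
    {z : V} (hz : z ∈ S.I a b x y) :
    S.d z x ≤ S.K ∨ S.d z y ≤ S.K ∨ ∃ j ≤ ℓ, S.d z (S.φ a b (f j)) ≤ S.K := by
  rcases hz with ⟨hzΛ, ⟨c1, c2⟩ | ⟨c1, c2⟩⟩
  · exact S.int_or hx hy f ℓ hf0 hfl hstep hzΛ c1 c2
  · have hrev : ∀ i < ℓ, (fun i => f (ℓ - i)) i = (fun i => f (ℓ - i)) (i + 1) ∨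
        S.G.Adj ((fun i => f (ℓ - i)) i) ((fun i => f (ℓ - i)) (i + 1)) := by
      intro i hi
      simp only
      rcases hstep (ℓ - i - 1) (by omega) with he | he
      · left; rw [show ℓ - i - 1 + 1 = ℓ - i by omega] at he
        rw [show ℓ - (i + 1) = ℓ - i - 1 by omega, he]
      · right; rw [show ℓ - i - 1 + 1 = ℓ - i by omega] at he
        rw [show ℓ - (i + 1) = ℓ - i - 1 by omega]
        exact he.symm
    have := S.int_or hy hx (fun i => f (ℓ - i)) ℓ (by simp [hfl]) (by simp [hf0]) hrev hzΛ c1 c2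
    rcases this with h | h | ⟨j, hj, h⟩
    · exact Or.inr (Or.inl h)
    · exact Or.inl h
    · exact Or.inr (Or.inr ⟨ℓ - j, by omega, h⟩)

/-- MINI: intervals between two members are metrically controlled -/
lemma mini {a b x y z : V} (hx : x ∈ S.Λ a b) (hy : y ∈ S.Λ a b)
    (hz : z ∈ S.I a b x y) : S.d x z ≤ S.K * S.d x y + 2 * S.K := by
  obtain ⟨f, hf0, hfl, hstep, -⟩ := S.exists_geo x y
  have hK := S.Kpos
  rcases S.int hx hy f (S.d x y) hf0 hfl hstep hz with h | h | ⟨j, hj, h⟩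
  · rw [S.d_comm] at h
    omega
  · have := S.d_tri x y z
    rw [S.d_comm z y] at h
    have hxy : S.d x y ≤ S.K * S.d x y := Nat.le_mul_of_pos_left _ hK
    omega
  · have h1 : S.d x (S.φ a b (f 0)) ≤ S.K := by rw [hf0]; exact S.d_center hx
    have h2 := S.lip_path (a := a) (b := b) f (S.d x y) hstep j hj
    have h3 := S.d_tri x (S.φ a b (f 0)) (S.φ a b (f j))
    have h4 := S.d_tri x (S.φ a b (f j)) z
    rw [S.d_comm z _] at h
    have : S.K * j ≤ S.K * S.d x y := Nat.mul_le_mul_left _ hj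
    omega

/-- trim: refine an interval membership by an intermediate point -/
lemma trim {p q u v w z : V} (hz : z ∈ S.I p q u v) (hw : w ∈ S.Λ p q) :
    z ∈ S.I p q u w ∨ z ∈ S.I p q w v := by
  rcases hz with ⟨hzΛ, ⟨c1, c2⟩ | ⟨c1, c2⟩⟩
  · rcases S.total p q z hzΛ w hw with h | h
    · exact Or.inl ⟨hzΛ, Or.inl ⟨c1, h⟩⟩
    · exact Or.inr ⟨hzΛ, Or.inl ⟨h, c2⟩⟩
  · rcases S.total p q z hzΛ w hw with h | h
    · exact Or.inr ⟨hzΛ, Or.inr ⟨c1, h⟩⟩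
    · exact Or.inl ⟨hzΛ, Or.inr ⟨h, c2⟩⟩

/-- the sandwich bound, version A -/
lemma sandA {a b α β m u y : V} (hαΛ : α ∈ S.Λ a b) (hβΛ : β ∈ S.Λ a b)
    (hmΛ : m ∈ S.Λ a b)
    (hor : S.le a b α β) (hu1 : S.le a b α u) (hu2 : S.le a b u β)
    (hum : u ∈ S.I a b α m) (hy : y ∈ S.I a b β m) (D0 : ℕ) (hd : S.d u y ≤ D0) :
    S.d u α ≤ S.K * D0 + 2 * S.K ∨ S.d u β ≤ S.K * D0 + 2 * S.K ∨
      S.d u m ≤ S.K * D0 + 2 * S.K := by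
  have huΛ : u ∈ S.Λ a b := hum.1
  have hyΛ : y ∈ S.Λ a b := hy.1
  have key : ∀ t, t ∈ S.I a b u y → S.d u t ≤ S.K * D0 + 2 * S.K := by
    intro t ht
    have := S.mini huΛ hyΛ ht
    have : S.K * S.d u y ≤ S.K * D0 := Nat.mul_le_mul_left _ hd
    have := S.mini huΛ hyΛ ht
    omega
  rcases hum with ⟨-, ⟨u1, u2⟩ | ⟨u1, u2⟩⟩
  · rcases hy with ⟨-, ⟨y1, y2⟩ | ⟨y1, y2⟩⟩
    · -- u ≤ m, β ≤ y : β between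
      exact Or.inr (Or.inl (key β ⟨hβΛ, Or.inl ⟨hu2, y1⟩⟩))
    · -- u ≤ m, m ≤ y : m between
      exact Or.inr (Or.inr (key m ⟨hmΛ, Or.inl ⟨u2, y1⟩⟩))
  · -- m ≤ u ≤ α
    rcases hy with ⟨-, ⟨y1, y2⟩ | ⟨y1, y2⟩⟩
    · -- β ≤ y : α ≤ β ≤ y so α between
      exact Or.inl (key α ⟨hαΛ, Or.inl ⟨u2, S.trans a b α β y hor y1⟩⟩)
    · -- m ≤ y ≤ β
      rcases S.total a b α hαΛ y hyΛ with h | h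
      · exact Or.inl (key α ⟨hαΛ, Or.inl ⟨u2, h⟩⟩)
      · exact Or.inl (key α ⟨hαΛ, Or.inr ⟨h, hu1⟩⟩)

/-- the sandwich bound, version B -/
lemma sandB {a b α β m u y : V} (hαΛ : α ∈ S.Λ a b) (hβΛ : β ∈ S.Λ a b)
    (hmΛ : m ∈ S.Λ a b)
    (hor : S.le a b α β) (hu1 : S.le a b α u) (hu2 : S.le a b u β)
    (hum : u ∈ S.I a b β m) (hy : y ∈ S.I a b α m) (D0 : ℕ) (hd : S.d u y ≤ D0) :
    S.d u α ≤ S.K * D0 + 2 * S.K ∨ S.d u β ≤ S.K * D0 + 2 * S.K ∨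
      S.d u m ≤ S.K * D0 + 2 * S.K := by
  have huΛ : u ∈ S.Λ a b := hum.1
  have hyΛ : y ∈ S.Λ a b := hy.1
  have key : ∀ t, t ∈ S.I a b u y → S.d u t ≤ S.K * D0 + 2 * S.K := by
    intro t ht
    have h1 := S.mini huΛ hyΛ ht
    have h2 : S.K * S.d u y ≤ S.K * D0 := Nat.mul_le_mul_left _ hd
    omega
  have hKK : S.K ≤ S.K * D0 + 2 * S.K := by
    have := S.Kpos; omega
  rcases hum with ⟨-, ⟨u1, u2⟩ | ⟨u1, u2⟩⟩
  · -- β ≤ u (and u ≤ m) : u tied with β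
    have : S.d β u ≤ S.K := S.tie_close hβΛ huΛ u1 hu2
    rw [S.d_comm] at this
    exact Or.inr (Or.inl (le_trans this hKK))
  · -- m ≤ u ≤ β
    rcases hy with ⟨-, ⟨y1, y2⟩ | ⟨y1, y2⟩⟩
    · -- α ≤ y ≤ m : m between y and u
      exact Or.inr (Or.inr (key m ⟨hmΛ, Or.inr ⟨y2, u1⟩⟩))
    · -- m ≤ y ≤ α : α between y and u
      exact Or.inl (key α ⟨hαΛ, Or.inr ⟨y2, hu1⟩⟩)

/-- the bound appearing in the monster lemma -/
def SB (S : Ctx V) : ℕ := 3 * S.K * S.K + 5 * S.K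

/-- monster core: a point of the coarse segment is close to one of the other two
sides, or close to the centre. -/
lemma monsterCore {a b α β c m : V}
    (hm : m = S.φ a b c) (hmΛ : m ∈ S.Λ a b)
    (hαΛ : α ∈ S.Λ a b) (hβΛ : β ∈ S.Λ a b)
    (hααc : α ∈ S.Λ α c) (hcαc : c ∈ S.Λ α c) (hmαc : m ∈ S.Λ α c)
    (hccβ : c ∈ S.Λ c β) (hβcβ : β ∈ S.Λ c β) (hmcβ : m ∈ S.Λ c β)
    (hor : S.le a b α β)
    (H1 : ∀ x ∈ S.I a b α m, ∃ y ∈ S.I α c α m, S.d x y ≤ S.K)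
    (H1' : ∀ x ∈ S.I a b β m, ∃ y ∈ S.I c β β m, S.d x y ≤ S.K)
    (H2 : ∀ y ∈ S.I α c c m, ∃ y' ∈ S.I c β c m, S.d y y' ≤ S.K)
    (H2' : ∀ y ∈ S.I c β c m, ∃ y' ∈ S.I α c c m, S.d y y' ≤ S.K)
    (H3 : ∀ y ∈ S.I c β β m, ∃ x ∈ S.I a b β m, S.d y x ≤ S.K)
    (H3' : ∀ y ∈ S.I α c α m, ∃ x ∈ S.I a b α m, S.d y x ≤ S.K)
    {u : V} (hu1 : S.le a b α u) (hu2 : S.le a b u β) (huΛ : u ∈ S.Λ a b) :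
    (∃ p, (p ∈ S.I α c α c ∨ p ∈ S.I c β c β) ∧ S.d u p ≤ S.SB) ∨ S.d u m ≤ S.SB := by
  have hK := S.Kpos
  have hSB : S.K * (3 * S.K) + 2 * S.K ≤ S.SB := by unfold SB; ring_nf; omega
  have hKSB : 3 * S.K ≤ S.SB := by unfold SB; nlinarith
  have hK1 : S.K ≤ S.SB := by omega
  have huI : u ∈ S.I a b α β := ⟨huΛ, Or.inl ⟨hu1, hu2⟩⟩
  rcases S.trim huI hmΛ with hA | hB
  · -- u ∈ [α, m]
    obtain ⟨y, hy, hdy⟩ := H1 u hA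
    rcases S.trim hy hcαc with hgood | hy2
    · exact Or.inl ⟨y, Or.inl hgood, le_trans hdy hK1⟩
    · obtain ⟨y', hy', hdy'⟩ := H2 y hy2
      rcases S.trim hy' hβcβ with hgood | hy3
      · refine Or.inl ⟨y', Or.inr hgood, ?_⟩
        have := S.d_tri u y y'; omega
      · obtain ⟨y'', hy'', hdy''⟩ := H3 y' hy3
        have hduy : S.d u y'' ≤ 3 * S.K := by
          have t1 := S.d_tri u y y'
          have t2 := S.d_tri u y' y''
          omega
        rcases S.sandA hαΛ hβΛ hmΛ hor hu1 hu2 hA hy'' (3 * S.K) hduy with h | h | h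
        · exact Or.inl ⟨α, Or.inl (S.mem_I_left hααc hcαc), le_trans h hSB⟩
        · exact Or.inl ⟨β, Or.inr (S.mem_I_right hccβ hβcβ), le_trans h hSB⟩
        · exact Or.inr (le_trans h hSB)
  · -- u ∈ [m, β] = [β, m]
    rw [S.I_comm] at hB
    obtain ⟨y, hy, hdy⟩ := H1' u hB
    -- trim y ∈ I c β β m against c : y ∈ I c β β c ∨ y ∈ I c β c m
    rcases S.trim hy hccβ with hgood | hy2
    · refine Or.inl ⟨y, Or.inr ?_, le_trans hdy hK1⟩
      rw [S.I_comm] at hgood; exact hgood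
    · obtain ⟨y', hy', hdy'⟩ := H2' y hy2
      -- trim y' ∈ I α c c m against α : y' ∈ I α c c α ∨ y' ∈ I α c α m
      rcases S.trim hy' hααc with hgood | hy3
      · refine Or.inl ⟨y', Or.inl ?_, ?_⟩
        · rw [S.I_comm] at hgood; exact hgood
        · have := S.d_tri u y y'; omega
      · obtain ⟨y'', hy'', hdy''⟩ := H3' y' hy3
        have hduy : S.d u y'' ≤ 3 * S.K := by
          have t1 := S.d_tri u y y'
          have t2 := S.d_tri u y' y''
          omega
        rcases S.sandB hαΛ hβΛ hmΛ hor hu1 hu2 hB hy'' (3 * S.K) hduy with h | h | h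
        · exact Or.inl ⟨α, Or.inl (S.mem_I_left hααc hcαc), le_trans h hSB⟩
        · exact Or.inl ⟨β, Or.inr (S.mem_I_right hccβ hβcβ), le_trans h hSB⟩
        · exact Or.inr (le_trans h hSB)

/-- the monster: any point of the coarse segment is close to one of the two other
sides of the triangle, or close to the centre. -/
lemma monster {a b c α β : V}
    (hsw : (α = a ∧ β = b) ∨ (α = b ∧ β = a)) (hor : S.le a b α β)
    {u : V} (hu1 : S.le a b α u) (hu2 : S.le a b u β) (huΛ : u ∈ S.Λ a b) :
    (∃ p, (p ∈ S.I a c a c ∨ p ∈ S.I c b c b) ∧ S.d u p ≤ S.SB) ∨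
      S.d u (S.φ a b c) ≤ S.SB := by
  rcases hsw with ⟨rfl, rfl⟩ | ⟨rfl, rfl⟩
  · -- pair (α, β), labels (α, β)
    have e1 : S.φ α β c = S.φ β α c := S.swap₁ α β c
    have e2 : S.φ α β c = S.φ c α β := S.φ_rot' α β c
    have e3 : S.φ α β c = S.φ β c α := S.φ_rot α β c
    have e4 : S.φ α β c = S.φ c β α := by rw [S.φ_rot α β c]; exact (S.swap₁ c β α).symm
    have e5 : S.φ α β c = S.φ α c β := S.swap₂ α β c
    have H1 : ∀ x ∈ S.I α β α (S.φ α β c), ∃ y ∈ S.I α c α (S.φ α β c), S.d x y ≤ S.K :=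
      (S.ax1I α β c).1
    have H1' : ∀ x ∈ S.I α β β (S.φ α β c), ∃ y ∈ S.I c β β (S.φ α β c), S.d x y ≤ S.K := by
      intro x hx
      rw [S.I_pair α β, e1] at hx
      obtain ⟨y, hy, hd⟩ := (S.ax1I β α c).1 x hx
      rw [← e1, S.I_pair β c] at hy
      exact ⟨y, hy, hd⟩
    have H2 : ∀ y ∈ S.I α c c (S.φ α β c), ∃ y' ∈ S.I c β c (S.φ α β c), S.d y y' ≤ S.K := by
      intro y hy
      rw [S.I_pair α c, e2] at hy
      obtain ⟨y', hy', hd⟩ := (S.ax1I c α β).1 y hy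
      rw [← e2] at hy'
      exact ⟨y', hy', hd⟩
    have H2' : ∀ y ∈ S.I c β c (S.φ α β c), ∃ y' ∈ S.I α c c (S.φ α β c), S.d y y' ≤ S.K := by
      intro y hy
      rw [e4] at hy
      obtain ⟨y', hy', hd⟩ := (S.ax1I c β α).1 y hy
      rw [← e4, S.I_pair c α] at hy'
      exact ⟨y', hy', hd⟩
    have H3 : ∀ y ∈ S.I c β β (S.φ α β c), ∃ x ∈ S.I α β β (S.φ α β c), S.d y x ≤ S.K := by
      intro y hy
      rw [S.I_pair c β, e3] at hy
      obtain ⟨x, hx, hd⟩ := (S.ax1I β c α).1 y hy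
      rw [← e3, S.I_pair β α] at hx
      exact ⟨x, hx, hd⟩
    have H3' : ∀ y ∈ S.I α c α (S.φ α β c), ∃ x ∈ S.I α β α (S.φ α β c), S.d y x ≤ S.K := by
      intro y hy
      obtain ⟨x, hx, hd⟩ := (S.ax1I α β c).2 y hy
      exact ⟨x, hx, by rw [S.d_comm]; exact hd⟩
    exact S.monsterCore rfl (S.φmem α β c) (S.aΛ α β) (S.bΛ α β)
      (S.aΛ α c) (S.bΛ α c) (by rw [e5]; exact S.φmem α c β)
      (S.aΛ c β) (S.bΛ c β) (by rw [e4]; exact S.φmem c β α)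
      hor H1 H1' H2 H2' H3 H3' hu1 hu2 huΛ
  · -- pair (β, α), labels (α, β)
    have E1 : S.φ β α c = S.φ α β c := S.swap₁ β α c
    have E2 : S.φ β α c = S.φ c α β := by rw [E1]; exact S.φ_rot' α β c
    have E3 : S.φ β α c = S.φ c β α := S.φ_rot' β α c
    have E4 : S.φ β α c = S.φ α c β := S.φ_rot β α c
    have H1 : ∀ x ∈ S.I β α α (S.φ β α c), ∃ y ∈ S.I α c α (S.φ β α c), S.d x y ≤ S.K := by
      intro x hx
      rw [S.I_pair β α, E1] at hx
      obtain ⟨y, hy, hd⟩ := (S.ax1I α β c).1 x hx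
      rw [← E1] at hy
      exact ⟨y, hy, hd⟩
    have H1' : ∀ x ∈ S.I β α β (S.φ β α c), ∃ y ∈ S.I c β β (S.φ β α c), S.d x y ≤ S.K := by
      intro x hx
      obtain ⟨y, hy, hd⟩ := (S.ax1I β α c).1 x hx
      rw [S.I_pair β c] at hy
      exact ⟨y, hy, hd⟩
    have H2 : ∀ y ∈ S.I α c c (S.φ β α c), ∃ y' ∈ S.I c β c (S.φ β α c), S.d y y' ≤ S.K := by
      intro y hy
      rw [S.I_pair α c, E2] at hy
      obtain ⟨y', hy', hd⟩ := (S.ax1I c α β).1 y hy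
      rw [← E2] at hy'
      exact ⟨y', hy', hd⟩
    have H2' : ∀ y ∈ S.I c β c (S.φ β α c), ∃ y' ∈ S.I α c c (S.φ β α c), S.d y y' ≤ S.K := by
      intro y hy
      rw [E3] at hy
      obtain ⟨y', hy', hd⟩ := (S.ax1I c β α).1 y hy
      rw [← E3, S.I_pair c α] at hy'
      exact ⟨y', hy', hd⟩
    have H3 : ∀ y ∈ S.I c β β (S.φ β α c), ∃ x ∈ S.I β α β (S.φ β α c), S.d y x ≤ S.K := by
      intro y hy
      rw [S.I_pair c β] at hy
      obtain ⟨x, hx, hd⟩ := (S.ax1I β α c).2 y hy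
      exact ⟨x, hx, by rw [S.d_comm]; exact hd⟩
    have H3' : ∀ y ∈ S.I α c α (S.φ β α c), ∃ x ∈ S.I β α α (S.φ β α c), S.d y x ≤ S.K := by
      intro y hy
      rw [E1] at hy
      obtain ⟨x, hx, hd⟩ := (S.ax1I α β c).2 y hy
      rw [← E1, S.I_pair α β] at hx
      exact ⟨x, hx, by rw [S.d_comm]; exact hd⟩
    have main := S.monsterCore rfl (S.φmem β α c) (S.bΛ β α) (S.aΛ β α)
      (S.aΛ α c) (S.bΛ α c) (by rw [E4]; exact S.φmem α c β)
      (S.aΛ c β) (S.bΛ c β) (by rw [E3]; exact S.φmem c β α)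
      hor H1 H1' H2 H2' H3 H3' hu1 hu2 huΛ
    rcases main with ⟨p, hp | hp, hd⟩ | h
    · rw [S.I_pair α c, S.I_comm] at hp
      exact Or.inl ⟨p, Or.inr hp, hd⟩
    · rw [S.I_pair c β, S.I_comm] at hp
      exact Or.inl ⟨p, Or.inl hp, hd⟩
    · exact Or.inr h

/-- ax2 phrased with I -/
lemma ax2I {c d : V} (h : S.G.Adj c d) (a b : V) :
    ∀ x ∈ S.I a b (S.φ a b c) (S.φ a b d),
    ∀ y ∈ S.I a b (S.φ a b c) (S.φ a b d), S.d x y ≤ S.K :=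
  S.ax2 a b c d h

/-- a `2K`-chain inside the coarse segment from `α` to a point `z` of the coarse
segment (or a degenerate terminal case). -/
lemma chain_to {a b α β z : V} (hαΛ : α ∈ S.Λ a b) (hβΛ : β ∈ S.Λ a b)
    (hor : S.le a b α β) (hzΛ : z ∈ S.Λ a b)
    (hz1 : S.le a b α z) (hz2 : S.le a b z β) :
    S.d α β ≤ S.K * S.K + 2 * S.K ∨
    ∃ (N : ℕ) (v : ℕ → V), v 0 = α ∧ v N = z ∧
      (∀ j ≤ N, v j ∈ S.Λ a b ∧ S.le a b α (v j) ∧ S.le a b (v j) β) ∧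
      (∀ j < N, S.d (v j) (v (j + 1)) ≤ 2 * S.K) := by
  classical
  have hK := S.Kpos
  by_cases hT : S.d α β ≤ S.K * S.K + 2 * S.K
  · exact Or.inl hT
  refine Or.inr ?_
  obtain ⟨f, hf0, hfl, hstep, -⟩ := S.exists_geo α z
  set nz := S.d α z with hnz
  set g : ℕ → V := fun j => S.φ a b (f j) with hg
  have hgΛ : ∀ j, g j ∈ S.Λ a b := fun j => S.φmem a b (f j)
  set A : ℕ → V := fun j =>
    if S.le a b α (g j) then (if S.le a b (g j) β then g j else β) else α with hA
  have hAval1 : ∀ j, ¬ S.le a b α (g j) → A j = α := by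
    intro j h; simp only [hA]; rw [if_neg h]
  have hAval2 : ∀ j, S.le a b α (g j) → S.le a b (g j) β → A j = g j := by
    intro j h1 h2; simp only [hA]; rw [if_pos h1, if_pos h2]
  have hAval3 : ∀ j, S.le a b α (g j) → ¬ S.le a b (g j) β → A j = β := by
    intro j h1 h2; simp only [hA]; rw [if_pos h1, if_neg h2]
  have hAin : ∀ j, A j ∈ S.Λ a b ∧ S.le a b α (A j) ∧ S.le a b (A j) β := by
    intro j
    by_cases h1 : S.le a b α (g j)
    · by_cases h2 : S.le a b (g j) β
      · rw [hAval2 j h1 h2]; exact ⟨hgΛ j, h1, h2⟩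
      · rw [hAval3 j h1 h2]; exact ⟨hβΛ, hor, S.refl hβΛ⟩
    · rw [hAval1 j h1]; exact ⟨hαΛ, S.refl hαΛ, hor⟩
  -- step bound for the anchored chain
  have hstepA : ∀ j < nz, S.d (A j) (A (j + 1)) ≤ S.K := by
    intro j hj
    rcases hstep j hj with he | he
    · have hge : g j = g (j + 1) := by simp only [hg]; rw [he]
      have : A j = A (j + 1) := by simp only [hA]; rw [hge]
      rw [this, S.d_self]; exact Nat.zero_le _
    · have hax := S.ax2I he a b
      have hIj : ∀ x ∈ S.I a b (g j) (g (j + 1)), ∀ y ∈ S.I a b (g j) (g (j + 1)),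
          S.d x y ≤ S.K := hax
      have hgj : g j ∈ S.I a b (g j) (g (j + 1)) := S.mem_I_left (hgΛ j) (hgΛ (j + 1))
      have hgj1 : g (j + 1) ∈ S.I a b (g j) (g (j + 1)) := S.mem_I_right (hgΛ j) (hgΛ (j + 1))
      by_cases h1 : S.le a b α (g j)
      · by_cases h2 : S.le a b (g j) β
        · -- j inband
          by_cases h1' : S.le a b α (g (j + 1))
          · by_cases h2' : S.le a b (g (j + 1)) β
            · rw [hAval2 j h1 h2, hAval2 (j + 1) h1' h2']
              exact hIj _ hgj _ hgj1
            · -- j inband, j+1 above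
              rw [hAval2 j h1 h2, hAval3 (j + 1) h1' h2']
              have hβle : S.le a b β (g (j + 1)) := by
                rcases S.total a b β hβΛ (g (j + 1)) (hgΛ (j + 1)) with h | h
                · exact h
                · exact absurd h h2'
              exact hIj _ hgj _ ⟨hβΛ, Or.inl ⟨h2, hβle⟩⟩
          · -- j inband, j+1 below
            rw [hAval2 j h1 h2, hAval1 (j + 1) h1']
            have hαle : S.le a b (g (j + 1)) α := by
              rcases S.total a b (g (j + 1)) (hgΛ (j + 1)) α hαΛ with h | h
              · exact h
              · exact absurd h h1'
            exact hIj _ hgj _ ⟨hαΛ, Or.inr ⟨hαle, h1⟩⟩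
        · -- j above
          have hβle : S.le a b β (g j) := by
            rcases S.total a b β hβΛ (g j) (hgΛ j) with h | h
            · exact h
            · exact absurd h h2
          by_cases h1' : S.le a b α (g (j + 1))
          · by_cases h2' : S.le a b (g (j + 1)) β
            · -- above, inband
              rw [hAval3 j h1 h2, hAval2 (j + 1) h1' h2']
              exact hIj _ ⟨hβΛ, Or.inr ⟨h2', hβle⟩⟩ _ hgj1
            · -- above, above
              rw [hAval3 j h1 h2, hAval3 (j + 1) h1' h2', S.d_self]
              exact Nat.zero_le _
          · -- above, below : degenerate, contradicts ¬hT
            exfalso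
            have hαle : S.le a b (g (j + 1)) α := by
              rcases S.total a b (g (j + 1)) (hgΛ (j + 1)) α hαΛ with h | h
              · exact h
              · exact absurd h h1'
            have hα : α ∈ S.I a b (g j) (g (j + 1)) :=
              ⟨hαΛ, Or.inr ⟨hαle, S.trans a b α β (g j) hor hβle⟩⟩
            have hβ : β ∈ S.I a b (g j) (g (j + 1)) :=
              ⟨hβΛ, Or.inr ⟨S.trans a b (g (j + 1)) α β hαle hor, hβle⟩⟩
            have := hIj _ hα _ hβ
            omega
      · -- j below
        have hαle : S.le a b (g j) α := by
          rcases S.total a b (g j) (hgΛ j) α hαΛ with h | h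
          · exact h
          · exact absurd h h1
        by_cases h1' : S.le a b α (g (j + 1))
        · by_cases h2' : S.le a b (g (j + 1)) β
          · -- below, inband
            rw [hAval1 j h1, hAval2 (j + 1) h1' h2']
            exact hIj _ ⟨hαΛ, Or.inl ⟨hαle, h1'⟩⟩ _ hgj1
          · -- below, above : degenerate
            exfalso
            have hβle : S.le a b β (g (j + 1)) := by
              rcases S.total a b β hβΛ (g (j + 1)) (hgΛ (j + 1)) with h | h
              · exact h
              · exact absurd h h2'
            have hα : α ∈ S.I a b (g j) (g (j + 1)) :=
              ⟨hαΛ, Or.inl ⟨hαle, S.trans a b α β (g (j + 1)) hor hβle⟩⟩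
            have hβ : β ∈ S.I a b (g j) (g (j + 1)) :=
              ⟨hβΛ, Or.inl ⟨S.trans a b (g j) α β hαle hor, hβle⟩⟩
            have := hIj _ hα _ hβ
            omega
        · -- below, below
          rw [hAval1 j h1, hAval1 (j + 1) h1', S.d_self]
          exact Nat.zero_le _
  -- endpoints
  have hg0 : S.d α (g 0) ≤ S.K := by
    have : g 0 = S.φ a b α := by simp only [hg]; rw [hf0]
    rw [this]; exact S.d_center hαΛ
  have hA0 : S.d α (A 0) ≤ S.K := by
    by_cases h1 : S.le a b α (g 0)
    · by_cases h2 : S.le a b (g 0) β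
      · rw [hAval2 0 h1 h2]; exact hg0
      · -- g 0 above : then β between α and g 0, so d α β small : contradiction with hT
        exfalso
        have hβle : S.le a b β (g 0) := by
          rcases S.total a b β hβΛ (g 0) (hgΛ 0) with h | h
          · exact h
          · exact absurd h h2
        have hβmem : β ∈ S.I a b α (g 0) := ⟨hβΛ, Or.inl ⟨hor, hβle⟩⟩
        have := S.mini hαΛ (hgΛ 0) hβmem
        have h2K : S.K * S.d α (g 0) ≤ S.K * S.K := Nat.mul_le_mul_left _ hg0
        omega
    · rw [hAval1 0 h1, S.d_self]; exact Nat.zero_le _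
  have hgN : S.d z (g nz) ≤ S.K := by
    have : g nz = S.φ a b z := by simp only [hg]; rw [hfl]
    rw [this]; exact S.d_center hzΛ
  have hAN : S.d (A nz) z ≤ S.K := by
    by_cases h1 : S.le a b α (g nz)
    · by_cases h2 : S.le a b (g nz) β
      · rw [hAval2 nz h1 h2, S.d_comm]; exact hgN
      · -- g nz above : then β ∈ I a b z (φ a b z), so d z β ≤ K
        have hβle : S.le a b β (g nz) := by
          rcases S.total a b β hβΛ (g nz) (hgΛ nz) with h | h
          · exact h
          · exact absurd h h2
        have hm : β ∈ S.I a b z (S.φ a b z) := by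
          have hge : g nz = S.φ a b z := by simp only [hg]; rw [hfl]
          rw [← hge]
          exact ⟨hβΛ, Or.inl ⟨hz2, hβle⟩⟩
        rw [hAval3 nz h1 h2, S.d_comm]
        exact S.d_center_int hzΛ hm
    · -- g nz below : α ∈ I a b z (φ a b z), so d z α ≤ K
      have hαle : S.le a b (g nz) α := by
        rcases S.total a b (g nz) (hgΛ nz) α hαΛ with h | h
        · exact h
        · exact absurd h h1
      have hm : α ∈ S.I a b z (S.φ a b z) := by
        have hge : g nz = S.φ a b z := by simp only [hg]; rw [hfl]
        rw [← hge]
        exact ⟨hαΛ, Or.inr ⟨hαle, hz1⟩⟩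
      rw [hAval1 nz h1, S.d_comm]
      exact S.d_center_int hzΛ hm
  -- assemble the chain
  set v : ℕ → V := fun j => if j = 0 then α else if j ≤ nz + 1 then A (j - 1) else z
    with hv
  have hv0 : v 0 = α := by simp [hv]
  have hvmid : ∀ j, 1 ≤ j → j ≤ nz + 1 → v j = A (j - 1) := by
    intro j h1 h2; simp only [hv]; rw [if_neg (by omega), if_pos h2]
  have hvend : v (nz + 2) = z := by
    simp only [hv]; rw [if_neg (by omega), if_neg (by omega)]
  refine ⟨nz + 2, v, hv0, hvend, ?_, ?_⟩
  · intro j hj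
    by_cases hj0 : j = 0
    · subst hj0; rw [hv0]; exact ⟨hαΛ, S.refl hαΛ, hor⟩
    by_cases hj1 : j ≤ nz + 1
    · rw [hvmid j (by omega) hj1]; exact hAin (j - 1)
    · rw [show j = nz + 2 by omega, hvend]; exact ⟨hzΛ, hz1, hz2⟩
  · intro j hj
    by_cases hj0 : j = 0
    · subst hj0
      rw [hv0, hvmid 1 (by omega) (by omega)]
      have : S.d α (A (1 - 1)) ≤ S.K := hA0
      omega
    by_cases hj1 : j ≤ nz
    · rw [hvmid j (by omega) (by omega), hvmid (j + 1) (by omega) (by omega)]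
      have := hstepA (j - 1) (by omega)
      rw [show j - 1 + 1 = j by omega] at this
      rw [show j + 1 - 1 = j by omega]
      omega
    · have hje : j = nz + 1 := by omega
      subst hje
      rw [hvmid (nz + 1) (by omega) (by omega), show nz + 1 + 1 = nz + 2 by rfl, hvend]
      have : S.d (A (nz + 1 - 1)) z ≤ S.K := by
        rw [show nz + 1 - 1 = nz by rfl]; exact hAN
      omega

/-- thinness constant -/
def TC (S : Ctx V) : ℕ :=
  S.K * S.K * S.K + 2 * S.K * S.K + 3 * S.SB + 3 * S.K + 1

/-- THINNESS: every point of the coarse segment `[a,b]` is `TC`-close to one of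
the coarse segments `[a,c]`, `[c,b]`. -/
theorem thin {a b c z : V} (hz : z ∈ S.I a b a b) :
    ∃ p, (p ∈ S.I a c a c ∨ p ∈ S.I c b c b) ∧ S.d z p ≤ S.TC := by
  have hK := S.Kpos
  have hzΛ : z ∈ S.Λ a b := hz.1
  have hSBTC : S.SB ≤ S.TC := by unfold TC; omega
  have hwin : 3 * S.SB + 2 * S.K + 1 ≤ S.TC := by unfold TC; nlinarith [S.Kpos]
  -- choose orientation labels
  obtain ⟨α, β, hsw, hor⟩ : ∃ α β, ((α = a ∧ β = b) ∨ (α = b ∧ β = a)) ∧ S.le a b α β := by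
    rcases S.total a b a (S.aΛ a b) b (S.bΛ a b) with h | h
    · exact ⟨a, b, Or.inl ⟨rfl, rfl⟩, h⟩
    · exact ⟨b, a, Or.inr ⟨rfl, rfl⟩, h⟩
  have hαΛ : α ∈ S.Λ a b := by
    rcases hsw with ⟨h1, -⟩ | ⟨h1, -⟩ <;> rw [h1]
    exacts [S.aΛ a b, S.bΛ a b]
  have hβΛ : β ∈ S.Λ a b := by
    rcases hsw with ⟨-, h2⟩ | ⟨-, h2⟩ <;> rw [h2]
    exacts [S.bΛ a b, S.aΛ a b]
  have hz12 : S.le a b α z ∧ S.le a b z β := by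
    rcases hz with ⟨-, ⟨c1, c2⟩ | ⟨c1, c2⟩⟩ <;>
      rcases hsw with ⟨h1, h2⟩ | ⟨h1, h2⟩ <;> rw [h1, h2]
    · exact ⟨c1, c2⟩
    · rw [h1, h2] at hor
      exact ⟨S.trans a b b a z hor c1, S.trans a b z b a c2 hor⟩
    · rw [h1, h2] at hor
      exact ⟨S.trans a b a b z hor c1, S.trans a b z a b c2 hor⟩
    · exact ⟨c1, c2⟩
  obtain ⟨hz1, hz2⟩ := hz12
  have hαgood : α ∈ S.I a c a c ∨ α ∈ S.I c b c b := by
    rcases hsw with ⟨h1, -⟩ | ⟨h1, -⟩ <;> rw [h1]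
    · exact Or.inl (S.mem_I_left (S.aΛ a c) (S.bΛ a c))
    · exact Or.inr (S.mem_I_right (S.aΛ c b) (S.bΛ c b))
  -- apply the monster to z itself
  rcases S.monster (c := c) hsw hor hz1 hz2 hzΛ with ⟨p, hp, hd⟩ | hzm
  · exact ⟨p, hp, le_trans hd hSBTC⟩
  -- z is close to the centre; run the chain argument
  rcases S.chain_to hαΛ hβΛ hor hzΛ hz1 hz2 with hT | ⟨N, v, hv0, hvN, hmem, hjump⟩
  · -- degenerate pair : z is close to α
    have hzI : z ∈ S.I a b α β := ⟨hzΛ, Or.inl ⟨hz1, hz2⟩⟩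
    have := S.mini hαΛ hβΛ hzI
    have h2 : S.K * S.d α β ≤ S.K * (S.K * S.K + 2 * S.K) := Nat.mul_le_mul_left _ hT
    refine ⟨α, hαgood, ?_⟩
    rw [S.d_comm]
    have hTC : S.K * (S.K * S.K + 2 * S.K) + 2 * S.K ≤ S.TC := by
      unfold TC; nlinarith [S.Kpos]
    omega
  · -- main case : window along the chain
    by_cases hclose : S.d α z ≤ 2 * S.SB + 2 * S.K + 1
    · refine ⟨α, hαgood, ?_⟩
      rw [S.d_comm]
      have : 2 * S.SB + 2 * S.K + 1 ≤ S.TC := by omega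
      omega
    · have hQ0 : ¬ (S.d (v 0) z ≤ 2 * S.SB + 2 * S.K + 1) := by rw [hv0]; exact hclose
      have hQN : S.d (v N) z ≤ 2 * S.SB + 2 * S.K + 1 := by rw [hvN, S.d_self]; omega
      obtain ⟨j, hjN, hQ1, hQ2⟩ :=
        find_cross (fun j => S.d (v j) z ≤ 2 * S.SB + 2 * S.K + 1) N hQ0 hQN
      obtain ⟨huΛ, hu1, hu2⟩ := hmem (j + 1) (by omega)
      rcases S.monster (c := c) hsw hor hu1 hu2 huΛ with ⟨p, hp, hd⟩ | hum
      · refine ⟨p, hp, ?_⟩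
        have t := S.d_tri z (v (j + 1)) p
        rw [S.d_comm z (v (j + 1))] at t
        omega
      · -- both z and the window point are close to the centre : contradiction
        exfalso
        have hjump' := hjump j hjN
        have t1 := S.d_tri (v j) (v (j + 1)) z
        have t2 := S.d_tri (v (j + 1)) (S.φ a b c) z
        rw [S.d_comm (S.φ a b c) z] at t2
        omega

/-- distance along a coarse path -/
lemma path_dist {f : ℕ → V} {ℓ : ℕ}
    (hstep : ∀ i < ℓ, f i = f (i + 1) ∨ S.G.Adj (f i) (f (i + 1))) :
    ∀ i j, i ≤ j → j ≤ ℓ → S.d (f i) (f j) ≤ j - i := by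
  intro i j hij hjl
  induction j with
  | zero => simp [show i = 0 by omega, S.d_self]
  | succ n ih =>
    by_cases hin : i = n + 1
    · simp [hin, S.d_self]
    · have h1 := ih (by omega) (by omega)
      have h2 : S.d (f n) (f (n + 1)) ≤ 1 := by
        rcases hstep n (by omega) with he | he
        · rw [he, S.d_self]; omega
        · exact S.d_adj he
      have := S.d_tri (f i) (f n) (f (n + 1))
      omega

/-- minimum of a function over an initial segment -/
lemma exists_min (F : ℕ → ℕ) : ∀ n, ∃ i ≤ n, ∀ j ≤ n, F i ≤ F j := by
  intro n
  induction n with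
  | zero => exact ⟨0, le_rfl, fun j hj => by rw [Nat.le_zero.mp hj]⟩
  | succ n ih =>
    obtain ⟨i, hi, hmin⟩ := ih
    by_cases h : F (n + 1) ≤ F i
    · refine ⟨n + 1, le_rfl, fun j hj => ?_⟩
      by_cases hj' : j ≤ n
      · exact le_trans h (hmin j hj')
      · rw [show j = n + 1 by omega]
    · refine ⟨i, by omega, fun j hj => ?_⟩
      by_cases hj' : j ≤ n
      · exact hmin j hj'
      · rw [show j = n + 1 by omega]; omega

/-- subdivision: points of the coarse segment are log-close to any walk -/
lemma subdiv : ∀ k : ℕ, ∀ a b : V, ∀ f : ℕ → V, ∀ ℓ : ℕ, f 0 = a → f ℓ = b →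
    (∀ i < ℓ, f i = f (i + 1) ∨ S.G.Adj (f i) (f (i + 1))) → ℓ ≤ 2 ^ k →
    ∀ z ∈ S.I a b a b, ∃ i ≤ ℓ, S.d z (f i) ≤ S.TC * k + 3 * S.K := by
  intro k
  induction k with
  | zero =>
    intro a b f ℓ hf0 hfl hstep hl z hz
    have hK := S.Kpos
    have hdab : S.d a b ≤ 1 := by
      have := S.path_dist hstep 0 ℓ (by omega) le_rfl
      rw [hf0, hfl] at this
      omega
    have := S.mini (S.aΛ a b) (S.bΛ a b) hz
    have h2 : S.K * S.d a b ≤ S.K := by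
      calc S.K * S.d a b ≤ S.K * 1 := Nat.mul_le_mul_left _ hdab
        _ = S.K := by ring
    refine ⟨0, by omega, ?_⟩
    rw [hf0, S.d_comm]
    omega
  | succ k ih =>
    intro a b f ℓ hf0 hfl hstep hl z hz
    by_cases hsmall : ℓ ≤ 2 ^ k
    · obtain ⟨i, hi, hd⟩ := ih a b f ℓ hf0 hfl hstep hsmall z hz
      refine ⟨i, hi, ?_⟩
      have : S.TC * k ≤ S.TC * (k + 1) := Nat.mul_le_mul_left _ (by omega)
      omega
    · have h2k : 2 ^ k ≤ ℓ := by omega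
      set c := f (2 ^ k) with hc
      obtain ⟨p, hp | hp, hdp⟩ := S.thin (c := c) hz
      · -- recurse on first half
        obtain ⟨i, hi, hd⟩ := ih a c f (2 ^ k) hf0 rfl
          (fun i hi => hstep i (by omega)) le_rfl p hp
        refine ⟨i, by omega, ?_⟩
        have := S.d_tri z p (f i)
        have hm : S.TC * (k + 1) = S.TC * k + S.TC := by ring
        omega
      · -- recurse on second half
        obtain ⟨i, hi, hd⟩ := ih c b (fun t => f (2 ^ k + t)) (ℓ - 2 ^ k) rfl
          (by show f (2 ^ k + (ℓ - 2 ^ k)) = b; rw [show 2 ^ k + (ℓ - 2 ^ k) = ℓ by omega]; exact hfl)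
          (fun i hi => by
            have := hstep (2 ^ k + i) (by omega)
            simpa [Nat.add_assoc] using this)
          (by have : 2 ^ (k + 1) = 2 ^ k + 2 ^ k := by ring
              omega) p hp
        refine ⟨2 ^ k + i, by omega, ?_⟩
        have := S.d_tri z p (f (2 ^ k + i))
        have hm : S.TC * (k + 1) = S.TC * k + S.TC := by ring
        omega

/-- 2^m grows faster than m² -/
lemma sq_le_pow : ∀ m : ℕ, 4 ≤ m → m * m ≤ 2 ^ m := by
  intro m hm
  induction m with
  | zero => omega
  | succ n ih =>
    by_cases h : 4 ≤ n
    · have h1 := ih h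
      have h2 : (n + 1) * (n + 1) ≤ 2 * (n * n) := by nlinarith
      calc (n + 1) * (n + 1) ≤ 2 * (n * n) := h2
        _ ≤ 2 * 2 ^ n := by omega
        _ = 2 ^ (n + 1) := by ring
    · have : n = 3 := by omega
      subst this
      norm_num

/-- absorption of the logarithmic bound -/
lemma logabs (D A B : ℕ) (h : D ≤ A * Nat.log 2 (6 * D) + B) :
    D ≤ A * (6 * A + 6 * B + 4) + B := by
  by_cases hD : D = 0
  · omega
  set m := Nat.log 2 (6 * D) with hm
  by_cases hmle : m ≤ 6 * A + 6 * B + 4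
  · have : A * m ≤ A * (6 * A + 6 * B + 4) := Nat.mul_le_mul_left _ hmle
    omega
  · exfalso
    have h4 : 4 ≤ m := by omega
    have hsq : m * m ≤ 2 ^ m := sq_le_pow m h4
    have hpow : 2 ^ m ≤ 6 * D := Nat.pow_log_le_self 2 (by omega)
    have hDm : 6 * D ≤ 6 * (A * m + B) := by omega
    have hmm : m * m ≤ 6 * A * m + 6 * B := by
      calc m * m ≤ 2 ^ m := hsq
        _ ≤ 6 * D := hpow
        _ ≤ 6 * (A * m + B) := hDm
        _ = 6 * A * m + 6 * B := by ring
    nlinarith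

/-- the uniform closeness constant -/
def C0 (S : Ctx V) : ℕ :=
  S.TC * (6 * S.TC + 6 * (3 * S.TC + 3 * S.K) + 4) + (3 * S.TC + 3 * S.K)

lemma TC_pos : 1 ≤ S.TC := by unfold TC; omega

lemma C0_ineq : S.TC + 2 * S.K ≤ S.C0 ∧ 2 * S.TC + 2 * S.K ≤ S.C0 ∧ 2 * S.TC ≤ S.C0 := by
  have h1 := S.TC_pos
  have h2 := S.Kpos
  unfold C0
  refine ⟨?_, ?_, ?_⟩ <;> nlinarith

/-- STAR: every point of the coarse segment is uniformly close to any geodesic. -/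
theorem star : ∀ n : ℕ, ∀ a b : V, ∀ f : ℕ → V, S.d a b ≤ n →
    f 0 = a → f (S.d a b) = b →
    (∀ i < S.d a b, f i = f (i + 1) ∨ S.G.Adj (f i) (f (i + 1))) →
    ∀ z ∈ S.I a b a b, ∃ i ≤ S.d a b, S.d z (f i) ≤ S.C0 := by
  intro n
  induction n using Nat.strong_induction_on with
  | _ n IH =>
  intro a b f hn hf0 hfl hstep z hz
  have hK := S.Kpos
  have hTC1 := S.TC_pos
  obtain ⟨hC1, hC2, hC3⟩ := S.C0_ineq
  have hpos : ∀ i ≤ S.d a b, S.d a (f i) = i ∧ S.d (f i) b = S.d a b - i := by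
    intro i hi
    have h1 : S.d a (f i) ≤ i := by
      have := S.path_dist hstep 0 i (by omega) hi
      rw [hf0] at this
      omega
    have h2 : S.d (f i) b ≤ S.d a b - i := by
      have := S.path_dist hstep i (S.d a b) hi le_rfl
      rw [hfl] at this
      omega
    have h3 := S.d_tri a (f i) b
    omega
  obtain ⟨ip, hip, hmin⟩ := exists_min (fun i => S.d z (f i)) (S.d a b)
  by_cases hD : S.d z (f ip) ≤ S.C0
  · exact ⟨ip, hip, hD⟩
  exfalso
  set D := S.d z (f ip) with hDdef
  have hD1 : 1 ≤ D := by omega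
  have hgapL : ∀ i ≤ S.d a b, i ≤ ip → ip - i ≤ D + S.d z (f i) := by
    intro i hi hiip
    have e1 := (hpos ip hip).1
    have e2 := (hpos i hi).1
    have t1 := S.d_tri a (f i) (f ip)
    have t2 := S.d_tri (f i) z (f ip)
    rw [S.d_comm (f i) z] at t2
    omega
  have hgapR : ∀ i ≤ S.d a b, ip ≤ i → i - ip ≤ D + S.d z (f i) := by
    intro i hi hiip
    have e1 := (hpos ip hip).1
    have e2 := (hpos i hi).1
    have t1 := S.d_tri a (f ip) (f i)
    have t2 := S.d_tri (f ip) z (f i)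
    rw [S.d_comm (f ip) z] at t2
    omega
  set ib := min (S.d a b) (ip + 3 * D) with hib
  have hibn : ib ≤ S.d a b := by omega
  obtain ⟨p1, hp1 | hp1, hdp1⟩ := S.thin (c := f ib) hz
  · -- z close to the segment [a, f ib] ; trisect again
    set ia := ip - 3 * D with hia
    obtain ⟨p2, hp2 | hp2, hdp2⟩ := S.thin (c := f ia) hp1
    · -- close to [a, f ia]
      by_cases hia0 : ip < 3 * D
      · -- ia = 0 : the segment [a,a] is small
        have hia' : ia = 0 := by omega
        rw [hia', hf0] at hp2
        have := S.mini (S.aΛ a a) (S.bΛ a a) hp2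
        rw [S.d_self] at this
        have hzb : S.d z a ≤ 2 * S.TC + 2 * S.K := by
          have t1 := S.d_tri z p1 p2
          have t2 := S.d_tri z p2 a
          rw [S.d_comm p2 a] at t2
          omega
        have := hmin 0 (by omega)
        rw [hf0] at this
        omega
      · -- proper left segment : use the induction hypothesis and the gap
        have hiale : ia ≤ S.d a b := by omega
        have hfia : S.d a (f ia) = ia := (hpos ia hiale).1
        obtain ⟨i, hi, hdC⟩ := IH ia (by omega) a (f ia) f (by omega)
          hf0 (by rw [hfia]) (fun i hi => hstep i (by omega)) p2 hp2
        rw [hfia] at hi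
        have hgap := hgapL i (by omega) (by omega)
        have t1 := S.d_tri z p1 p2
        have t2 := S.d_tri z p2 (f i)
        omega
    · -- middle segment [f ia, f ib] of length ≤ 6D : subdivision + log absorption
      have hiaib : ia ≤ ib := by omega
      have hL6 : ib - ia ≤ 6 * D := by omega
      have hLk : ib - ia ≤ 2 ^ (Nat.log 2 (ib - ia) + 1) :=
        le_of_lt (Nat.lt_pow_succ_log_self (by norm_num) _)
      obtain ⟨i, hi, hdC⟩ := S.subdiv (Nat.log 2 (ib - ia) + 1) (f ia) (f ib)
        (fun t => f (ia + t)) (ib - ia) rfl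
        (by show f (ia + (ib - ia)) = f ib; rw [show ia + (ib - ia) = ib by omega])
        (fun i hi => by
          have := hstep (ia + i) (by omega)
          simpa [Nat.add_assoc] using this) hLk p2 hp2
      have hzi : S.d z (f (ia + i)) ≤ 2 * S.TC + (S.TC * (Nat.log 2 (ib - ia) + 1) + 3 * S.K) := by
        have t1 := S.d_tri z p1 p2
        have t2 := S.d_tri z p2 (f (ia + i))
        omega
      have hmin' := hmin (ia + i) (by omega)
      have hlog : Nat.log 2 (ib - ia) ≤ Nat.log 2 (6 * D) :=
        Nat.log_mono_right hL6
      have hDlog : D ≤ S.TC * Nat.log 2 (6 * D) + (3 * S.TC + 3 * S.K) := by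
        have : S.TC * (Nat.log 2 (ib - ia)) ≤ S.TC * Nat.log 2 (6 * D) :=
          Nat.mul_le_mul_left _ hlog
        have hmul : S.TC * (Nat.log 2 (ib - ia) + 1) =
            S.TC * (Nat.log 2 (ib - ia)) + S.TC := by ring
        omega
      have := logabs D S.TC (3 * S.TC + 3 * S.K) hDlog
      have : D ≤ S.C0 := by unfold C0; omega
      omega
  · -- z close to the segment [f ib, b]
    by_cases hibe : ib = S.d a b
    · -- ib = n₀ : the segment [b, b] is small
      rw [hibe, hfl] at hp1
      have := S.mini (S.aΛ b b) (S.bΛ b b) hp1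
      rw [S.d_self] at this
      have hzb : S.d z b ≤ S.TC + 2 * S.K := by
        have t1 := S.d_tri z p1 b
        rw [S.d_comm p1 b] at t1
        omega
      have := hmin (S.d a b) (by omega)
      rw [hfl] at this
      omega
    · -- proper right segment : induction hypothesis and the gap
      have hibe' : ib = ip + 3 * D := by omega
      have hfib : S.d (f ib) b = S.d a b - ib := (hpos ib hibn).2
      obtain ⟨i, hi, hdC⟩ := IH (S.d a b - ib) (by omega) (f ib) b
        (fun t => f (ib + t)) (by omega) rfl
        (by show f (ib + S.d (f ib) b) = b
            rw [hfib, show ib + (S.d a b - ib) = S.d a b by omega]; exact hfl)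
        (fun i hi => by
          have := hstep (ib + i) (by omega)
          simpa [Nat.add_assoc] using this) p1 hp1
      rw [hfib] at hi
      have hgap := hgapR (ib + i) (by omega) (by omega)
      have t1 := S.d_tri z p1 (f (ib + i))
      omega

/-- a full chain along the coarse segment -/
lemma chain_xy (x y : V) : S.d x y ≤ S.K * S.K + 2 * S.K ∨
    ∃ (N : ℕ) (v : ℕ → V), v 0 = x ∧ v N = y ∧
      (∀ j ≤ N, v j ∈ S.I x y x y) ∧
      (∀ j < N, S.d (v j) (v (j + 1)) ≤ 2 * S.K) := by
  rcases S.total x y x (S.aΛ x y) y (S.bΛ x y) with hor | hor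
  · rcases S.chain_to (S.aΛ x y) (S.bΛ x y) hor (S.bΛ x y) hor (S.refl (S.bΛ x y))
      with hT | ⟨N, v, hv0, hvN, hmem, hjump⟩
    · exact Or.inl hT
    · refine Or.inr ⟨N, v, hv0, hvN, fun j hj => ?_, hjump⟩
      obtain ⟨h1, h2, h3⟩ := hmem j hj
      exact ⟨h1, Or.inl ⟨h2, h3⟩⟩
  · rcases S.chain_to (S.bΛ x y) (S.aΛ x y) hor (S.aΛ x y) hor (S.refl (S.aΛ x y))
      with hT | ⟨N, v, hv0, hvN, hmem, hjump⟩
    · rw [S.d_comm]; exact Or.inl hT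
    · refine Or.inr ⟨N, fun i => v (N - i), by simp [hvN], by simp [hv0], fun j hj => ?_, ?_⟩
      · obtain ⟨h1, h2, h3⟩ := hmem (N - j) (by omega)
        exact ⟨h1, Or.inr ⟨h2, h3⟩⟩
      · intro j hj
        have h := hjump (N - j - 1) (by omega)
        rw [show N - j - 1 + 1 = N - j by omega] at h
        show S.d (v (N - j)) (v (N - (j + 1))) ≤ 2 * S.K
        rw [show N - (j + 1) = N - j - 1 by omega, S.d_comm]
        exact h

/-- betweenness: points of the coarse segment lie coarsely between the endpoints -/
lemma betw {x y p : V} (hp : p ∈ S.I x y x y) :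
    S.d x p + S.d p y ≤ S.d x y + 2 * S.C0 := by
  obtain ⟨f, hf0, hfl, hstep, hposi⟩ := S.exists_geo x y
  obtain ⟨i, hi, hd⟩ := S.star (S.d x y) x y f le_rfl hf0 hfl hstep p hp
  obtain ⟨h1, h2⟩ := hposi i hi
  have t1 := S.d_tri x (f i) p
  have t2 := S.d_tri p (f i) y
  have hc := S.d_comm p (f i)
  omega

/-- the easy product inequality -/
lemma prodLE {x y w p : V} (hp : p ∈ S.I x y x y) :
    S.d w x + S.d w y ≤ 2 * S.d w p + S.d x y + 2 * S.C0 := by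
  have hb := S.betw hp
  have t1 := S.d_tri w p x
  have t2 := S.d_tri w p y
  rw [S.d_comm p x] at t1
  omega

/-- the constant for the reverse product inequality -/
def E1 (S : Ctx V) : ℕ := 4 * S.C0 + 4 * S.TC + 4 * S.K + 2 * S.K * S.K

/-- the hard product inequality: some point of the coarse segment realizes the
Gromov product -/
lemma prodGE (w x y : V) : ∃ p ∈ S.I x y x y,
    2 * S.d w p + S.d x y ≤ S.d w x + S.d w y + S.E1 := by
  have hK := S.Kpos
  have hxmem : x ∈ S.I x y x y := S.mem_I_left (S.aΛ x y) (S.bΛ x y)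
  rcases S.chain_xy x y with hT | ⟨N, v, hv0, hvN, hmem, hjump⟩
  · -- small pair
    refine ⟨x, hxmem, ?_⟩
    have t := S.d_tri w y x
    rw [S.d_comm y x] at t
    have hE : 2 * (S.K * S.K + 2 * S.K) ≤ S.E1 := by unfold E1; nlinarith
    omega
  · by_cases hQ0 : S.d x y + S.d x w ≤ 2 * S.d x (v 0) + S.d y w
    · refine ⟨x, hxmem, ?_⟩
      rw [hv0, S.d_self] at hQ0
      rw [S.d_comm w x, S.d_comm w y]
      have hE : 0 ≤ S.E1 := Nat.zero_le _
      omega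
    · have hQN : S.d x y + S.d x w ≤ 2 * S.d x (v N) + S.d y w := by
        rw [hvN]
        have := S.d_tri x y w
        omega
      obtain ⟨i, hiN, hQ1, hQ2⟩ :=
        find_cross (fun i => S.d x y + S.d x w ≤ 2 * S.d x (v i) + S.d y w) N hQ0 hQN
      -- the crossing point p := v (i+1)
      have hpI : v (i + 1) ∈ S.I x y x y := hmem (i + 1) (by omega)
      have hjump' := hjump i hiN
      have hA : 2 * S.d x (v (i + 1)) + S.d y w ≤ S.d x y + S.d x w + 4 * S.K := by
        have t := S.d_tri x (v i) (v (i + 1))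
        omega
      obtain ⟨q, hq | hq, hdq⟩ := S.thin (c := w) hpI
      · -- q on the side [x, w]
        have hb := S.betw hq
        refine ⟨v (i + 1), hpI, ?_⟩
        have t1 := S.d_tri x q (v (i + 1))
        have t2 := S.d_tri w q (v (i + 1))
        -- from hQ2 : d x y + d x w ≤ 2 d x p + d y w
        have hE : 4 * S.C0 + 4 * S.TC ≤ S.E1 := by unfold E1; omega
        have c1 := S.d_comm w x
        have c2 := S.d_comm w y
        have c3 := S.d_comm w q
        have c4 := S.d_comm q (v (i + 1))
        omega
      · -- q on the side [w, y]
        have hb := S.betw hq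
        refine ⟨v (i + 1), hpI, ?_⟩
        have t1 := S.d_tri x (v (i + 1)) y
        have t2 := S.d_tri (v (i + 1)) q y
        have t3 := S.d_tri w q (v (i + 1))
        have hE : 4 * S.C0 + 4 * S.TC + 4 * S.K ≤ S.E1 := by unfold E1; omega
        have c1 := S.d_comm w x
        have c2 := S.d_comm w y
        have c3 := S.d_comm q (v (i + 1))
        omega

/-- the four-point inequality -/
theorem fourpoint (x y z w : V) :
    S.d x y + S.d z w ≤ max (S.d x z + S.d y w) (S.d x w + S.d y z) +
      (6 * S.C0 + 6 * S.TC + 4 * S.K + 2 * S.K * S.K) := by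
  obtain ⟨p, hp, hP⟩ := S.prodGE w x y
  obtain ⟨q, hq | hq, hdq⟩ := S.thin (c := z) hp
  · -- q on [x, z] : conclude with the first term of the max
    have hL := S.prodLE (w := w) hq
    have t := S.d_tri w p q
    have hE1 : S.E1 = 4 * S.C0 + 4 * S.TC + 4 * S.K + 2 * S.K * S.K := rfl
    have hmax : S.d x z + S.d y w ≤ max (S.d x z + S.d y w) (S.d x w + S.d y z) :=
      le_max_left _ _
    have c1 := S.d_comm w x
    have c2 := S.d_comm w z
    have c3 := S.d_comm w y
    have c4 := S.d_comm z w
    omega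
  · -- q on [z, y] : conclude with the second term of the max
    have hL := S.prodLE (w := w) hq
    have t := S.d_tri w p q
    have hE1 : S.E1 = 4 * S.C0 + 4 * S.TC + 4 * S.K + 2 * S.K * S.K := rfl
    have hmax : S.d x w + S.d y z ≤ max (S.d x z + S.d y w) (S.d x w + S.d y z) :=
      le_max_right _ _
    have c1 := S.d_comm w z
    have c2 := S.d_comm w y
    have c3 := S.d_comm w x
    have c4 := S.d_comm z y
    have c5 := S.d_comm z w
    omega

end Ctx
end Bow


/-- Bowditch's hyperbolicity criterion (Prop 3.1 of Bowditch, as used in the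
Appendix of the paper): a connected graph equipped with coarse geodesics
`Λ_{ab}` (coarsely totally ordered, symmetric in `a, b`) and a symmetric
ternary "center" function `φ` satisfying the three axioms with constant `K`
is Gromov hyperbolic, in the four-point sense. -/
theorem hyperbolic_of_coarse_geodesics_and_centers {V : Type*}
    (G : SimpleGraph V) (hconn : G.Connected)
    (Λ : V → V → Set V) (le : V → V → V → V → Prop)
    -- endpoints belong to the coarse geodesic
    (hmem : ∀ a b : V, a ∈ Λ a b ∧ b ∈ Λ a b)
    -- the coarse order on `Λ a b` is transitive and total
    (htrans : ∀ a b x y z : V, le a b x y → le a b y z → le a b x z)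
    (htotal : ∀ a b : V, ∀ x ∈ Λ a b, ∀ y ∈ Λ a b, le a b x y ∨ le a b y x)
    -- `Λ_{ab} = Λ_{ba}` as sets, with reversed order
    (hsymmΛ : ∀ a b : V, Λ a b = Λ b a)
    (hsymmle : ∀ a b x y : V, le a b x y ↔ le b a y x)
    -- the center function, symmetric under permutations of its arguments
    (φ : V → V → V → V)
    (hφswap₁ : ∀ a b c : V, φ a b c = φ b a c)
    (hφswap₂ : ∀ a b c : V, φ a b c = φ a c b)
    (hφmem : ∀ a b c : V, φ a b c ∈ Λ a b)
    (K : ℕ) (hK : 0 < K)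
    -- Axiom (1): Hausdorff distance between `Λ_{ab}[a, φ(a,b,c)]` and
    -- `Λ_{ac}[a, φ(a,b,c)]` is at most `K`
    (ax1 : ∀ a b c : V,
      (∀ x ∈ coarseInterval Λ le a b a (φ a b c),
        ∃ y ∈ coarseInterval Λ le a c a (φ a b c), G.dist x y ≤ K) ∧
      (∀ y ∈ coarseInterval Λ le a c a (φ a b c),
        ∃ x ∈ coarseInterval Λ le a b a (φ a b c), G.dist x y ≤ K))
    -- Axiom (2): if `c` and `d` are adjacent then
    -- `diam Λ_{ab}[φ(a,b,c), φ(a,b,d)] ≤ K`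
    (ax2 : ∀ a b c d : V, G.Adj c d →
      ∀ x ∈ coarseInterval Λ le a b (φ a b c) (φ a b d),
      ∀ y ∈ coarseInterval Λ le a b (φ a b c) (φ a b d), G.dist x y ≤ K)
    -- Axiom (3): if `c ∈ Λ_{ab}` then `diam Λ_{ab}[c, φ(a,b,c)] ≤ K`
    (ax3 : ∀ a b c : V, c ∈ Λ a b →
      ∀ x ∈ coarseInterval Λ le a b c (φ a b c),
      ∀ y ∈ coarseInterval Λ le a b c (φ a b c), G.dist x y ≤ K) :
    ∃ δ : ℕ, ∀ x y z w : V,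
      G.dist x y + G.dist z w ≤
        max (G.dist x z + G.dist y w) (G.dist x w + G.dist y z) + δ := by
  let S : Bow.Ctx V :=
    { G := G, conn := hconn, Λ := Λ, le := le, mem := hmem, trans := htrans,
      total := htotal, symmΛ := hsymmΛ, symmle := hsymmle, φ := φ, swap₁ := hφswap₁,
      swap₂ := hφswap₂, φmem := hφmem, K := K, Kpos := hK, ax1 := ax1, ax2 := ax2,
      ax3 := ax3 }
  exact ⟨6 * S.C0 + 6 * S.TC + 4 * S.K + 2 * S.K * S.K,
    fun x y z w => S.fourpoint x y z w⟩
end
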